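/- Let P¹ and P² be deterministic parity automata over the same finite alphabet Σ. Then L(P¹) \ L(P²) is nonempty if and only if there exist a finite word u ∈ Σ^* and a nonempty finite word w ∈ Σ^+ such that the ultimately periodic word u·w^ω is accepted by P¹ and rejected by P². -/

import Mathlib

/-- The run of a deterministic automaton with transition function `δ` from
state `q₀` on the infinite word `x`. -/
def parityRun {A Q : Type*} (δ : Q → A → Q) (q₀ : Q) (x : ℕ → A) : ℕ → Q
  | 0 => q₀
  | n + 1 => δ (parityRun δ q₀ x n) (x n)

/-- The deterministic parity automaton `(Q, δ, q₀, π)` accepts the infinite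
word `x` iff the maximum priority occurring infinitely often along the run is
even. -/
def ParityAccepts {A Q : Type*} (δ : Q → A → Q) (q₀ : Q) (π : Q → ℕ)
    (x : ℕ → A) : Prop :=
  ∃ p : ℕ, IsGreatest {p : ℕ | {n : ℕ | π (parityRun δ q₀ x n) = p}.Infinite} p ∧ Even p

/-- The ultimately periodic word `u·w^ω` (for a nonempty `w`). -/
def upWord {A : Type*} (u w : List A) (hw : 0 < w.length) (n : ℕ) : A :=
  if h : n < u.length then u[n]
  else w[(n - u.length) % w.length]'(Nat.mod_lt _ hw)

namespace DPAAux

/-- index map: fold `n` back into the first period. -/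
def phiIdx (i L n : ℕ) : ℕ := if n < i then n else i + (n - i) % L

lemma phiIdx_zero (i L : ℕ) : phiIdx i L 0 = 0 := by
  unfold phiIdx
  split
  · rfl
  · have : i = 0 := by omega
    subst this
    simp

lemma phiIdx_mem (i L n : ℕ) (hL : 0 < L) (hn : i ≤ n) :
    i ≤ phiIdx i L n ∧ phiIdx i L n < i + L := by
  unfold phiIdx
  rw [if_neg (by omega)]
  have := Nat.mod_lt (n - i) hL
  omega

lemma phiIdx_small (i L n : ℕ) (hn : n < i) : phiIdx i L n = n := by
  simp [phiIdx, hn]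

lemma upWord_eq {A : Type} (α : ℕ → A) (i j : ℕ) (hij : i < j)
    (hw : 0 < (List.ofFn fun k : Fin (j - i) => α (i + k)).length) (n : ℕ) :
    upWord (List.ofFn fun k : Fin i => α k) (List.ofFn fun k : Fin (j - i) => α (i + k))
      hw n = α (phiIdx i (j - i) n) := by
  unfold upWord phiIdx
  by_cases h : n < i
  · simp [h]
  · have hmod : (n - i) % (j - i) < j - i := Nat.mod_lt _ (by omega)
    simp only [List.length_ofFn, h, dif_neg, if_neg h, List.getElem_ofFn]
    simp

lemma run_upWord {A Q : Type} (δ : Q → A → Q) (q₀ : Q) (α : ℕ → A) (i j : ℕ) (hij : i < j)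
    (hrep : parityRun δ q₀ α i = parityRun δ q₀ α j)
    (x : ℕ → A) (hx : ∀ n, x n = α (phiIdx i (j - i) n)) (n : ℕ) :
    parityRun δ q₀ x n = parityRun δ q₀ α (phiIdx i (j - i) n) := by
  set L := j - i with hL
  have hLpos : 0 < L := by omega
  induction n with
  | zero => rw [phiIdx_zero]; rfl
  | succ n ih =>
    have step : parityRun δ q₀ x (n + 1)
        = parityRun δ q₀ α (phiIdx i L n + 1) := by
      show δ (parityRun δ q₀ x n) (x n) = _
      rw [ih, hx n]
      rfl
    rw [step]
    by_cases h1 : n + 1 < i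
    · rw [phiIdx_small i L n (by omega), phiIdx_small i L (n+1) h1]
    · by_cases h2 : n < i
      · -- n + 1 = i
        have hni : n + 1 = i := by omega
        rw [phiIdx_small i L n h2]
        unfold phiIdx
        rw [if_neg (by omega), hni]
        simp
      · -- n ≥ i
        have hn : i ≤ n := by omega
        set m := (n - i) % L with hm
        have hmlt : m < L := Nat.mod_lt _ hLpos
        by_cases h3 : m + 1 < L
        · have : (n + 1 - i) % L = m + 1 := by
            have hd := Nat.div_add_mod (n - i) L
            have : n + 1 - i = L * ((n - i) / L) + (m + 1) := by omega
            rw [this, Nat.mul_add_mod]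
            exact Nat.mod_eq_of_lt h3
          unfold phiIdx
          rw [if_neg (by omega), if_neg (by omega), ← hm, this, Nat.add_assoc]
        · -- m + 1 = L, wrap around
          have hmL : m + 1 = L := by omega
          have hphin : phiIdx i L n = j - 1 := by
            unfold phiIdx; rw [if_neg (by omega), ← hm]; omega
          have hphin1 : phiIdx i L (n + 1) = i := by
            unfold phiIdx
            rw [if_neg (by omega)]
            have hd := Nat.div_add_mod (n - i) L
            have : n + 1 - i = L * ((n - i) / L + 1) := by
              rw [Nat.mul_succ]; omega
            rw [this, Nat.mul_mod_right, Nat.add_zero]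
          rw [hphin, hphin1]
          have : j - 1 + 1 = j := by omega
          rw [this, ← hrep]

lemma phi_preimage_infinite (i L m : ℕ) (hL : 0 < L) (hm1 : i ≤ m) (hm2 : m < i + L) :
    {n | phiIdx i L n = m}.Infinite := by
  refine Set.infinite_of_injective_forall_mem (f := fun k : ℕ => m + k * L) ?_ ?_
  · intro a b hab
    simp only at hab
    have : a * L = b * L := by omega
    exact Nat.eq_of_mul_eq_mul_right hL this
  · intro k
    show phiIdx i L (m + k * L) = m
    unfold phiIdx
    rw [if_neg (by omega)]
    have : m + k * L - i = (m - i) + k * L := by omega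
    rw [this, Nat.add_mul_mod_self_right, Nat.mod_eq_of_lt (by omega)]
    omega

/-- every run of a finite automaton has a greatest infinitely-occurring priority. -/
lemma exists_greatest {Q : Type} [Finite Q] (π : Q → ℕ) (r : ℕ → Q) :
    ∃ p, IsGreatest {p : ℕ | {n : ℕ | π (r n) = p}.Infinite} p := by
  have hne : {p : ℕ | {n : ℕ | π (r n) = p}.Infinite}.Nonempty := by
    obtain ⟨q, hq⟩ := Finite.exists_infinite_fiber r
    refine ⟨π q, ?_⟩
    have : Set.Infinite (r ⁻¹' {q}) := Set.infinite_coe_iff.mp hq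
    apply this.mono
    intro n hn
    simp only [Set.mem_preimage, Set.mem_singleton_iff] at hn
    simp [hn]
  have hbdd : BddAbove {p : ℕ | {n : ℕ | π (r n) = p}.Infinite} := by
    apply Set.Finite.bddAbove
    apply (Set.finite_range π).subset
    intro p hp
    obtain ⟨n, hn⟩ := Set.Infinite.nonempty hp
    exact ⟨r n, hn⟩
  exact ⟨sSup _, Nat.sSup_mem hne hbdd, fun p hp => le_csSup hbdd hp⟩

lemma exists_bound {Q : Type} [Finite Q] (π : Q → ℕ) (r : ℕ → Q) (p : ℕ)
    (hg : IsGreatest {p : ℕ | {n : ℕ | π (r n) = p}.Infinite} p) :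
    ∃ N : ℕ, ∀ n, N ≤ n → π (r n) ≤ p := by
  have hfin : {n : ℕ | p < π (r n)}.Finite := by
    have hsub : {n : ℕ | p < π (r n)} ⊆ ⋃ q : Q, {n : ℕ | r n = q ∧ p < π q} := by
      intro n hn
      exact Set.mem_iUnion.mpr ⟨r n, rfl, hn⟩
    apply Set.Finite.subset _ hsub
    apply Set.finite_iUnion
    intro q
    by_cases hq : p < π q
    · by_contra hinf
      have hinf' : {n : ℕ | r n = q ∧ p < π q}.Infinite := hinf
      have : {n : ℕ | π (r n) = π q}.Infinite := by
        apply hinf'.mono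
        intro n hn
        simp only [Set.mem_setOf_eq] at hn ⊢
        rw [hn.1]
      exact absurd (hg.2 this) (by omega)
    · have : {n : ℕ | r n = q ∧ p < π q} = ∅ := by
        ext n; simp [hq]
      rw [this]; exact Set.finite_empty
  obtain ⟨N, hN⟩ := hfin.bddAbove
  refine ⟨N + 1, fun n hn => ?_⟩
  by_contra hc
  have : n ∈ {n : ℕ | p < π (r n)} := by simpa using by omega
  have := hN this
  have : n ≤ N := this
  omega

/-- transfer lemma: the lasso word has greatest infinitely-occurring priority `p`. -/
lemma transfer {A Q : Type} (δ : Q → A → Q) (q₀ : Q) (π : Q → ℕ) (α x : ℕ → A)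
    (i j p : ℕ) (hij : i < j)
    (hrep : parityRun δ q₀ α i = parityRun δ q₀ α j)
    (hx : ∀ n, x n = α (phiIdx i (j - i) n))
    (hub : ∀ n, i ≤ n → π (parityRun δ q₀ α n) ≤ p)
    (hm : ∃ m, i ≤ m ∧ m < j ∧ π (parityRun δ q₀ α m) = p) :
    IsGreatest {p' : ℕ | {n : ℕ | π (parityRun δ q₀ x n) = p'}.Infinite} p := by
  have hLpos : 0 < j - i := by omega
  constructor
  · obtain ⟨m, hm1, hm2, hm3⟩ := hm
    have hinf := phi_preimage_infinite i (j - i) m hLpos hm1 (by omega)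
    apply hinf.mono
    intro n hn
    simp only [Set.mem_setOf_eq] at hn ⊢
    rw [run_upWord δ q₀ α i j hij hrep x hx n, hn, hm3]
  · intro p' hp'
    have hp'' : {n : ℕ | π (parityRun δ q₀ x n) = p'}.Infinite := hp'
    obtain ⟨n, hn, hni⟩ := hp''.exists_gt i
    simp only [Set.mem_setOf_eq] at hn
    rw [run_upWord δ q₀ α i j hij hrep x hx n] at hn
    have hmem := phiIdx_mem i (j - i) n hLpos (by omega)
    rw [← hn]
    exact hub _ hmem.1

end DPAAux

open DPAAux in
theorem diff_nonempty_iff_ultimately_periodic_witness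
    {A Q₁ Q₂ : Type} [Fintype A] [Fintype Q₁] [Fintype Q₂]
    (δ₁ : Q₁ → A → Q₁) (q₁ : Q₁) (π₁ : Q₁ → ℕ)
    (δ₂ : Q₂ → A → Q₂) (q₂ : Q₂) (π₂ : Q₂ → ℕ) :
    (∃ α : ℕ → A, ParityAccepts δ₁ q₁ π₁ α ∧ ¬ ParityAccepts δ₂ q₂ π₂ α) ↔
    (∃ (u w : List A) (hw : w ≠ []),
      ParityAccepts δ₁ q₁ π₁ (upWord u w (List.length_pos_iff.mpr hw)) ∧
      ¬ ParityAccepts δ₂ q₂ π₂ (upWord u w (List.length_pos_iff.mpr hw))) := by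
  constructor
  · rintro ⟨α, hacc, hrej⟩
    obtain ⟨p₁, hg₁, heven₁⟩ := hacc
    obtain ⟨p₂, hg₂⟩ := exists_greatest π₂ (parityRun δ₂ q₂ α)
    have hodd₂ : ¬ Even p₂ := fun he => hrej ⟨p₂, hg₂, he⟩
    obtain ⟨N₁, hN₁⟩ := exists_bound π₁ (parityRun δ₁ q₁ α) p₁ hg₁
    obtain ⟨N₂, hN₂⟩ := exists_bound π₂ (parityRun δ₂ q₂ α) p₂ hg₂
    set r : ℕ → Q₁ × Q₂ := fun n => (parityRun δ₁ q₁ α n, parityRun δ₂ q₂ α n) with hr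
    obtain ⟨s, hs⟩ := Finite.exists_infinite_fiber r
    have hsT : Set.Infinite (r ⁻¹' {s}) := Set.infinite_coe_iff.mp hs
    obtain ⟨i, hiT, hiN⟩ := hsT.exists_gt (max N₁ N₂)
    have hS₁ : {n : ℕ | π₁ (parityRun δ₁ q₁ α n) = p₁}.Infinite := hg₁.1
    have hS₂ : {n : ℕ | π₂ (parityRun δ₂ q₂ α n) = p₂}.Infinite := hg₂.1
    obtain ⟨m₁, hm₁, hm₁i⟩ := hS₁.exists_gt i
    obtain ⟨m₂, hm₂, hm₂i⟩ := hS₂.exists_gt i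
    obtain ⟨j, hjT, hjm⟩ := hsT.exists_gt (max m₁ m₂)
    simp only [Set.mem_preimage, Set.mem_singleton_iff] at hiT hjT
    simp only [Set.mem_setOf_eq] at hm₁ hm₂
    have hij : i < j := by omega
    have hrep₁ : parityRun δ₁ q₁ α i = parityRun δ₁ q₁ α j := by
      have := hiT.trans hjT.symm
      exact congrArg Prod.fst this
    have hrep₂ : parityRun δ₂ q₂ α i = parityRun δ₂ q₂ α j := by
      have := hiT.trans hjT.symm
      exact congrArg Prod.snd this
    set u : List A := List.ofFn fun k : Fin i => α k with hu
    set w : List A := List.ofFn fun k : Fin (j - i) => α (i + k) with hwdef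
    have hwne : w ≠ [] := by
      rw [hwdef]
      intro h
      have := congrArg List.length h
      simp at this
      omega
    refine ⟨u, w, hwne, ?_, ?_⟩
    · have hx : ∀ n, upWord u w (List.length_pos_iff.mpr hwne) n = α (phiIdx i (j - i) n) :=
        fun n => upWord_eq α i j hij _ n
      refine ⟨p₁, transfer δ₁ q₁ π₁ α _ i j p₁ hij hrep₁ hx
        (fun n hn => hN₁ n (by omega)) ⟨m₁, by omega, by omega, hm₁⟩, heven₁⟩
    · have hx : ∀ n, upWord u w (List.length_pos_iff.mpr hwne) n = α (phiIdx i (j - i) n) :=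
        fun n => upWord_eq α i j hij _ n
      rintro ⟨p, hg, hev⟩
      have := hg.unique (transfer δ₂ q₂ π₂ α _ i j p₂ hij hrep₂ hx
        (fun n hn => hN₂ n (by omega)) ⟨m₂, by omega, by omega, hm₂⟩)
      exact hodd₂ (this ▸ hev)
  · rintro ⟨u, w, hw, h1, h2⟩
    exact ⟨upWord u w (List.length_pos_iff.mpr hw), h1, h2⟩
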